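/- If f is an m-nomial in n variables whose Newton polytope has dimension d ≤ n−1, then the zero set of f in the positive orthant has no compact connected components. -/
import Mathlib


/-- If the Newton polytope of an `m`-nomial `f` in `n` variables has dimension
at most `n - 1`, then the zero set of `f` in the positive orthant has no
compact connected components. -/
theorem no_compact_component_of_degenerate_newton (n m : ℕ) (hn : 1 ≤ n)
    (c : Fin m → ℝ) (a : Fin m → (Fin n → ℝ))
    (hc : ∀ i, c i ≠ 0) (ha : Function.Injective a)
    (hdim : Module.finrank ℝ
      (affineSpan ℝ (convexHull ℝ (Set.range a))).direction ≤ n - 1) :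
    ∀ x ∈ {x : Fin n → ℝ | (∀ j, 0 < x j) ∧ ∑ i, c i * ∏ j, x j ^ (a i j) = 0},
      ¬ IsCompact (connectedComponentIn
        {x : Fin n → ℝ | (∀ j, 0 < x j) ∧ ∑ i, c i * ∏ j, x j ^ (a i j) = 0}
        x) := by
  intro x hx hK
  set Z : Set (Fin n → ℝ) :=
    {x : Fin n → ℝ | (∀ j, 0 < x j) ∧ ∑ i, c i * ∏ j, x j ^ (a i j) = 0} with hZ
  obtain ⟨hxpos, hxsum⟩ := hx
  set D := (affineSpan ℝ (convexHull ℝ (Set.range a))).direction with hD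
  -- the direction is a proper subspace
  have hDlt : D < ⊤ := by
    rw [lt_top_iff_ne_top]
    intro h
    rw [h, finrank_top, Module.finrank_fin_fun] at hdim
    omega
  obtain ⟨φ, hφne, hφmap⟩ := Submodule.exists_dual_map_eq_bot_of_lt_top hDlt inferInstance
  have hφker : ∀ w ∈ D, φ w = 0 := by
    intro w hw
    have hmem : φ w ∈ Submodule.map φ D := ⟨w, hw, rfl⟩
    rw [hφmap] at hmem
    simpa using hmem
  set v : Fin n → ℝ := fun j => φ (fun k => if j = k then 1 else 0) with hv
  have hφval : ∀ y : Fin n → ℝ, φ y = ∑ j, y j * v j := by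
    intro y
    simpa [smul_eq_mul] using LinearMap.pi_apply_eq_sum_univ φ y
  obtain ⟨j0, hj0⟩ : ∃ j, v j ≠ 0 := by
    by_contra h
    push_neg at h
    apply hφne
    ext y
    simp only [LinearMap.comp_apply, LinearMap.zero_apply]
    have hy : (LinearMap.single ℝ (fun _ => ℝ) y) (1:ℝ)
        = fun k => if y = k then (1:ℝ) else 0 := by
      ext k; simp [LinearMap.single_apply, Pi.single_apply, eq_comm]
    rw [hy]
    exact h y
  -- all exponents have the same φ-value
  have key : ∀ i i' : Fin m, φ (a i) = φ (a i') := by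
    intro i i'
    have hmem : ∀ i : Fin m, a i ∈ affineSpan ℝ (convexHull ℝ (Set.range a)) := fun i =>
      subset_affineSpan ℝ _ (subset_convexHull ℝ _ ⟨i, rfl⟩)
    have hsub : a i -ᵥ a i' ∈ D := AffineSubspace.vsub_mem_direction (hmem i) (hmem i')
    have := hφker _ hsub
    rw [vsub_eq_sub, map_sub, sub_eq_zero] at this
    exact this
  -- the curve t ↦ (x j * t ^ v j) stays in Z
  set g : ℝ → (Fin n → ℝ) := fun t j => x j * t ^ v j with hg
  have hcurve : ∀ t : ℝ, 0 < t → g t ∈ Z := by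
    intro t ht
    refine ⟨fun j => mul_pos (hxpos j) (Real.rpow_pos_of_pos ht _), ?_⟩
    have hterm : ∀ i : Fin m, ∏ j, (x j * t ^ v j) ^ a i j
        = (∏ j, x j ^ a i j) * t ^ φ (a i) := by
      intro i
      calc ∏ j, (x j * t ^ v j) ^ a i j
          = ∏ j, (x j ^ a i j * t ^ (a i j * v j)) := by
            refine Finset.prod_congr rfl fun j _ => ?_
            rw [Real.mul_rpow (hxpos j).le (Real.rpow_pos_of_pos ht _).le,
              ← Real.rpow_mul ht.le, mul_comm (v j)]
        _ = (∏ j, x j ^ a i j) * ∏ j, t ^ (a i j * v j) := Finset.prod_mul_distrib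
        _ = (∏ j, x j ^ a i j) * t ^ (∑ j, a i j * v j) := by
            rw [← Real.rpow_sum_of_pos ht]
        _ = (∏ j, x j ^ a i j) * t ^ φ (a i) := by rw [hφval (a i)]
    rcases isEmpty_or_nonempty (Fin m) with hm | hm
    · simp
    · set i0 := Classical.arbitrary (Fin m) with hi0
      calc ∑ i, c i * ∏ j, (x j * t ^ v j) ^ a i j
          = ∑ i, (c i * ∏ j, x j ^ a i j) * t ^ φ (a i0) := by
            refine Finset.sum_congr rfl fun i _ => ?_
            rw [hterm i, key i i0]; ring
        _ = (∑ i, c i * ∏ j, x j ^ a i j) * t ^ φ (a i0) := by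
            rw [Finset.sum_mul]
        _ = 0 := by rw [hxsum, zero_mul]
  -- the curve is connected, contains x, so lies in the connected component
  have hcont : ContinuousOn g (Set.Ioi (0 : ℝ)) := by
    refine continuousOn_pi.2 fun j => ContinuousOn.mul continuousOn_const ?_
    intro t ht
    exact (Real.continuousAt_rpow_const t (v j) (Or.inl (ne_of_gt ht))).continuousWithinAt
  have hconn : IsPreconnected (g '' Set.Ioi (0 : ℝ)) :=
    isPreconnected_Ioi.image g hcont
  have hxin : x ∈ g '' Set.Ioi (0 : ℝ) := by
    refine ⟨1, Set.mem_Ioi.mpr one_pos, ?_⟩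
    funext j
    simp [hg]
  have hSZ : g '' Set.Ioi (0 : ℝ) ⊆ Z := by
    rintro y ⟨t, ht, rfl⟩
    exact hcurve t ht
  have hsubcc : g '' Set.Ioi (0 : ℝ) ⊆ connectedComponentIn Z x :=
    hconn.subset_connectedComponentIn hxin hSZ
  -- but the curve is unbounded: contradiction with compactness
  obtain ⟨r, hr⟩ := isBounded_iff_forall_norm_le.mp hK.isBounded
  set B : ℝ := max 1 ((r + 1) / x j0) with hB
  have hBpos : (0 : ℝ) < B := lt_of_lt_of_le one_pos (le_max_left _ _)
  set t0 : ℝ := B ^ (1 / v j0) with ht0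
  have ht0pos : 0 < t0 := Real.rpow_pos_of_pos hBpos _
  have ht0v : t0 ^ v j0 = B := by
    rw [ht0, ← Real.rpow_mul hBpos.le, one_div_mul_cancel hj0, Real.rpow_one]
  have hmem : g t0 ∈ connectedComponentIn Z x :=
    hsubcc ⟨t0, Set.mem_Ioi.mpr ht0pos, rfl⟩
  have h1 : ‖g t0 j0‖ ≤ ‖g t0‖ := norm_le_pi_norm (g t0) j0
  have h2 : g t0 j0 = x j0 * B := by simp [hg, ht0v]
  have h3 : r + 1 ≤ x j0 * B := by
    have h' : (r + 1) / x j0 ≤ B := le_max_right _ _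
    exact (div_le_iff₀' (hxpos j0)).mp h'
  have h4 : ‖g t0 j0‖ = x j0 * B := by
    rw [h2, Real.norm_eq_abs, abs_of_pos (mul_pos (hxpos j0) hBpos)]
  have := hr _ hmem
  rw [← h4] at h3
  linarith [h1.trans this]
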